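/- Substituting κ = (ε + 2ζ₁ζ₂)/(1 + ε − 2ζ₁²) into the stationarity condition ∂J/∂ζ₂ = 0 for the TMD cost J yields the polynomial equation (ε+1)ε³ + 8ζ₁ζ₂ε²(ε+1−ζ₁²) + 4ζ₂²(ε+1−ζ₁²)(4ζ₁²(ε+1−ζ₁²) − ε − 1) = 0 in ζ₂. -/

import Mathlib

private lemma cubic_hasDerivAt (a b c d x : ℝ) :
    HasDerivAt (fun z : ℝ => a * z ^ 3 + b * z ^ 2 + c * z + d)
      (3 * a * x ^ 2 + 2 * b * x + c) x := by
  have h := (((hasDerivAt_pow 3 x).const_mul a).add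
      ((hasDerivAt_pow 2 x).const_mul b)).add
      (((hasDerivAt_id x).const_mul c).add_const d)
  have h' : a * ((3 : ℕ) * x ^ (3 - 1)) + b * ((2 : ℕ) * x ^ (2 - 1)) + c * 1
      = 3 * a * x ^ 2 + 2 * b * x + c := by push_cast; ring
  rw [h'] at h
  simp only [Pi.add_def, id, ← add_assoc] at h
  exact h



set_option maxHeartbeats 4000000 in
/-- Substituting `κ = (ε + 2ζ₁ζ₂)/(1 + ε − 2ζ₁²)` into the stationarity condition
`∂J/∂ζ₂ = 0` for the TMD cost `J` yields the polynomial equation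
`(ε+1)ε³ + 8ζ₁ζ₂ε²(ε+1−ζ₁²) + 4ζ₂²(ε+1−ζ₁²)(4ζ₁²(ε+1−ζ₁²) − ε − 1) = 0` in `ζ₂`. -/
theorem stmt_5 (ε ζ₁ ζ₂ : ℝ) (hε : 0 < ε) (hζ₁ : 0 < ζ₁) (hζ₁1 : ζ₁ < 1) (hζ₂ : 0 < ζ₂)
    (num den : ℝ → ℝ → ℝ)
    (hnum : num = fun z κ => z * ε * (4 * ζ₁ ^ 2 * z * κ + z * (4 * ζ₁ * z + ε)
      + ζ₁ * κ ^ 2 * (1 + ε)))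
    (hden : den = fun z κ => ζ₁ * z * (4 * ζ₁ * z * κ + 4 * z ^ 2 + κ ^ 2)
      + ε ^ 2 * (ζ₁ + z) * (ζ₁ * κ ^ 2 + z)
      + 2 * ζ₁ * z * ε * (κ * (2 * ζ₁ * (ζ₁ + z) - 1) + 2 * z * (ζ₁ + z) + κ ^ 2))
    (J : ℝ → ℝ → ℝ) (hJ : J = fun z κ => num z κ / den z κ)
    (κstar : ℝ) (hκstar : κstar = (ε + 2 * ζ₁ * ζ₂) / (1 + ε - 2 * ζ₁ ^ 2))
    (h1 : 1 + ε - 2 * ζ₁ ^ 2 ≠ 0) (h2 : ε + 1 - ζ₁ ^ 2 ≠ 0) (h3 : den ζ₂ κstar ≠ 0)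
    (hstat : deriv (fun z => J z κstar) ζ₂ = 0) :
    (ε + 1) * ε ^ 3 + 8 * ζ₁ * ζ₂ * ε ^ 2 * (ε + 1 - ζ₁ ^ 2)
      + 4 * ζ₂ ^ 2 * (ε + 1 - ζ₁ ^ 2) * (4 * ζ₁ ^ 2 * (ε + 1 - ζ₁ ^ 2) - ε - 1) = 0 := by
  -- cubic coefficients of num and den in z (κ = κstar fixed)
  have hNf : (fun z => num z κstar)
      = fun z : ℝ => (4 * ε * ζ₁) * z ^ 3 + (4 * ε * ζ₁ ^ 2 * κstar + ε ^ 2) * z ^ 2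
          + (ε * ζ₁ * κstar ^ 2 * (1 + ε)) * z + 0 := by
    subst hnum; funext z; ring
  have hDf : (fun z => den z κstar)
      = fun z : ℝ => (4 * ζ₁ * (1 + ε)) * z ^ 3
          + (4 * ζ₁ ^ 2 * κstar * (1 + ε) + 4 * ε * ζ₁ ^ 2 + ε ^ 2) * z ^ 2
          + (ζ₁ * κstar ^ 2 - 2 * ε * ζ₁ * κstar + 2 * ε * ζ₁ * κstar ^ 2
              + 4 * ε * ζ₁ ^ 3 * κstar + ε ^ 2 * ζ₁ + ε ^ 2 * ζ₁ * κstar ^ 2) * z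
          + ε ^ 2 * ζ₁ ^ 2 * κstar ^ 2 := by
    subst hden; funext z; ring
  have hD0 : (4 * ζ₁ * (1 + ε)) * ζ₂ ^ 3
          + (4 * ζ₁ ^ 2 * κstar * (1 + ε) + 4 * ε * ζ₁ ^ 2 + ε ^ 2) * ζ₂ ^ 2
          + (ζ₁ * κstar ^ 2 - 2 * ε * ζ₁ * κstar + 2 * ε * ζ₁ * κstar ^ 2
              + 4 * ε * ζ₁ ^ 3 * κstar + ε ^ 2 * ζ₁ + ε ^ 2 * ζ₁ * κstar ^ 2) * ζ₂
          + ε ^ 2 * ζ₁ ^ 2 * κstar ^ 2 ≠ 0 := by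
    have := congrFun hDf ζ₂
    simpa [← this] using h3
  have hfun : (fun z => J z κstar)
      = fun z : ℝ => ((4 * ε * ζ₁) * z ^ 3 + (4 * ε * ζ₁ ^ 2 * κstar + ε ^ 2) * z ^ 2
          + (ε * ζ₁ * κstar ^ 2 * (1 + ε)) * z + 0)
        / ((4 * ζ₁ * (1 + ε)) * z ^ 3
          + (4 * ζ₁ ^ 2 * κstar * (1 + ε) + 4 * ε * ζ₁ ^ 2 + ε ^ 2) * z ^ 2
          + (ζ₁ * κstar ^ 2 - 2 * ε * ζ₁ * κstar + 2 * ε * ζ₁ * κstar ^ 2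
              + 4 * ε * ζ₁ ^ 3 * κstar + ε ^ 2 * ζ₁ + ε ^ 2 * ζ₁ * κstar ^ 2) * z
          + ε ^ 2 * ζ₁ ^ 2 * κstar ^ 2) := by
    funext z
    have hn := congrFun hNf z
    have hd := congrFun hDf z
    simp only [hJ]
    rw [← hn, ← hd]
  have hN := cubic_hasDerivAt (4 * ε * ζ₁) (4 * ε * ζ₁ ^ 2 * κstar + ε ^ 2)
      (ε * ζ₁ * κstar ^ 2 * (1 + ε)) 0 ζ₂
  have hD := cubic_hasDerivAt (4 * ζ₁ * (1 + ε))
      (4 * ζ₁ ^ 2 * κstar * (1 + ε) + 4 * ε * ζ₁ ^ 2 + ε ^ 2)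
      (ζ₁ * κstar ^ 2 - 2 * ε * ζ₁ * κstar + 2 * ε * ζ₁ * κstar ^ 2
        + 4 * ε * ζ₁ ^ 3 * κstar + ε ^ 2 * ζ₁ + ε ^ 2 * ζ₁ * κstar ^ 2)
      (ε ^ 2 * ζ₁ ^ 2 * κstar ^ 2) ζ₂
  have hder := hN.div hD hD0
  simp only [Pi.div_def] at hder
  rw [← hfun] at hder
  have hzero := hder.deriv
  rw [hstat] at hzero
  -- numerator of derivative vanishes
  set N := (4 * ε * ζ₁) * ζ₂ ^ 3 + (4 * ε * ζ₁ ^ 2 * κstar + ε ^ 2) * ζ₂ ^ 2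
      + (ε * ζ₁ * κstar ^ 2 * (1 + ε)) * ζ₂ + 0 with hNdef
  set D := (4 * ζ₁ * (1 + ε)) * ζ₂ ^ 3
      + (4 * ζ₁ ^ 2 * κstar * (1 + ε) + 4 * ε * ζ₁ ^ 2 + ε ^ 2) * ζ₂ ^ 2
      + (ζ₁ * κstar ^ 2 - 2 * ε * ζ₁ * κstar + 2 * ε * ζ₁ * κstar ^ 2
          + 4 * ε * ζ₁ ^ 3 * κstar + ε ^ 2 * ζ₁ + ε ^ 2 * ζ₁ * κstar ^ 2) * ζ₂
      + ε ^ 2 * ζ₁ ^ 2 * κstar ^ 2 with hDdef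
  have hG : (3 * (4 * ε * ζ₁) * ζ₂ ^ 2 + 2 * (4 * ε * ζ₁ ^ 2 * κstar + ε ^ 2) * ζ₂
        + ε * ζ₁ * κstar ^ 2 * (1 + ε)) * D
      - N * (3 * (4 * ζ₁ * (1 + ε)) * ζ₂ ^ 2
        + 2 * (4 * ζ₁ ^ 2 * κstar * (1 + ε) + 4 * ε * ζ₁ ^ 2 + ε ^ 2) * ζ₂
        + (ζ₁ * κstar ^ 2 - 2 * ε * ζ₁ * κstar + 2 * ε * ζ₁ * κstar ^ 2
            + 4 * ε * ζ₁ ^ 3 * κstar + ε ^ 2 * ζ₁ + ε ^ 2 * ζ₁ * κstar ^ 2)) = 0 := by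
    have hD2 : D ^ 2 ≠ 0 := pow_ne_zero 2 hD0
    field_simp at hzero
    linarith [hzero]
  -- key algebraic identity connecting G and the target polynomial
  have hC : ε ^ 2 * ζ₁ * (ζ₂ * (1 + ε) + ε * ζ₁) ^ 2 ≠ 0 := by positivity
  have hκQ : κstar * (1 + ε - 2 * ζ₁ ^ 2) = ε + 2 * ζ₁ * ζ₂ := by
    rw [hκstar]; field_simp
  rw [hNdef, hDdef] at hG
  have hCT : ε ^ 2 * ζ₁ * (ζ₂ * (1 + ε) + ε * ζ₁) ^ 2
      * ((ε + 1) * ε ^ 3 + 8 * ζ₁ * ζ₂ * ε ^ 2 * (ε + 1 - ζ₁ ^ 2)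
        + 4 * ζ₂ ^ 2 * (ε + 1 - ζ₁ ^ 2) * (4 * ζ₁ ^ 2 * (ε + 1 - ζ₁ ^ 2) - ε - 1)) = 0 := by
    linear_combination (1 + ε - 2 * ζ₁ ^ 2) ^ 4 * hG + ((-1) * ε ^ 2 * ζ₁ * ζ₂ ^ 2 * κstar + 14 * ε ^ 2 * ζ₁ ^ 2 * ζ₂ ^ 3 + 18 * ε ^ 2 * ζ₁ ^ 3 * ζ₂ ^ 2 * κstar + (-96) * ε ^ 2 * ζ₁ ^ 4 * ζ₂ ^ 3 + (-100) * ε ^ 2 * ζ₁ ^ 5 * ζ₂ ^ 2 * κstar + 248 * ε ^ 2 * ζ₁ ^ 6 * ζ₂ ^ 3 + 248 * ε ^ 2 * ζ₁ ^ 7 * ζ₂ ^ 2 * κstar + (-288) * ε ^ 2 * ζ₁ ^ 8 * ζ₂ ^ 3 + (-288) * ε ^ 2 * ζ₁ ^ 9 * ζ₂ ^ 2 * κstar + 128 * ε ^ 2 * ζ₁ ^ 10 * ζ₂ ^ 3 + 128 * ε ^ 2 * ζ₁ ^ 11 * ζ₂ ^ 2 * κstar + 1 * ε ^ 3 * ζ₁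 * ζ₂ ^ 2 + (-4) * ε ^ 3 * ζ₁ * ζ₂ ^ 2 * κstar + 42 * ε ^ 3 * ζ₁ ^ 2 * ζ₂ ^ 3 + (-1) * ε ^ 3 * ζ₁ ^ 3 * κstar ^ 3 + (-4) * ε ^ 3 * ζ₁ ^ 3 * ζ₂ ^ 2 + 46 * ε ^ 3 * ζ₁ ^ 3 * ζ₂ ^ 2 * κstar + (-10) * ε ^ 3 * ζ₁ ^ 4 * ζ₂ * κstar ^ 2 + (-240) * ε ^ 3 * ζ₁ ^ 4 * ζ₂ ^ 3 + 6 * ε ^ 3 * ζ₁ ^ 5 * κstar ^ 3 + 4 * ε ^ 3 * ζ₁ ^ 5 * ζ₂ ^ 2 + (-188) * ε ^ 3 * ζ₁ ^ 5 * ζ₂ ^ 2 * κstar + 56 * ε ^ 3 * ζ₁ ^ 6 * ζ₂ * κstar ^ 2 + 432 * ε ^ 3 * ζ₁ ^ 6 * ζ₂ ^ 3 + (-12) * ε ^ 3 * ζ₁ ^ 7 * κstar ^ 3 + 320 * ε ^ 3 * ζ₁ ^ 7 * ζ₂ ^ 2 * κstar + (-104) * ε ^ 3 * ζ₁ ^ 8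 * ζ₂ * κstar ^ 2 + (-256) * ε ^ 3 * ζ₁ ^ 8 * ζ₂ ^ 3 + 8 * ε ^ 3 * ζ₁ ^ 9 * κstar ^ 3 + (-192) * ε ^ 3 * ζ₁ ^ 9 * ζ₂ ^ 2 * κstar + 64 * ε ^ 3 * ζ₁ ^ 10 * ζ₂ * κstar ^ 2 + 3 * ε ^ 4 * ζ₁ * ζ₂ ^ 2 + (-6) * ε ^ 4 * ζ₁ * ζ₂ ^ 2 * κstar + (-2) * ε ^ 4 * ζ₁ ^ 2 * ζ₂ * κstar + 42 * ε ^ 4 * ζ₁ ^ 2 * ζ₂ ^ 3 + (-1) * ε ^ 4 * ζ₁ ^ 3 * κstar ^ 2 + (-4) * ε ^ 4 * ζ₁ ^ 3 * κstar ^ 3 + (-28) * ε ^ 4 * ζ₁ ^ 3 * ζ₂ ^ 2 + 30 * ε ^ 4 * ζ₁ ^ 3 * ζ₂ ^ 2 * κstar + (-30) * ε ^ 4 * ζ₁ ^ 4 * ζ₂ * κstar ^ 2 + (-192) * ε ^ 4 * ζ₁ ^ 4 * ζ₂ ^ 3 + 4 * ε ^ 4 * ζ₁ ^ 5 * κstar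 ^ 2 + 18 * ε ^ 4 * ζ₁ ^ 5 * κstar ^ 3 + 40 * ε ^ 4 * ζ₁ ^ 5 * ζ₂ ^ 2 + (-76) * ε ^ 4 * ζ₁ ^ 5 * ζ₂ ^ 2 * κstar + 16 * ε ^ 4 * ζ₁ ^ 6 * ζ₂ * κstar + 112 * ε ^ 4 * ζ₁ ^ 6 * ζ₂ * κstar ^ 2 + 184 * ε ^ 4 * ζ₁ ^ 6 * ζ₂ ^ 3 + (-4) * ε ^ 4 * ζ₁ ^ 7 * κstar ^ 2 + (-24) * ε ^ 4 * ζ₁ ^ 7 * κstar ^ 3 + (-16) * ε ^ 4 * ζ₁ ^ 7 * ζ₂ ^ 2 + 72 * ε ^ 4 * ζ₁ ^ 7 * ζ₂ ^ 2 * κstar + (-16) * ε ^ 4 * ζ₁ ^ 8 * ζ₂ * κstar + (-104) * ε ^ 4 * ζ₁ ^ 8 * ζ₂ * κstar ^ 2 + 8 * ε ^ 4 * ζ₁ ^ 9 * κstar ^ 3 + 3 * ε ^ 5 * ζ₁ * ζ₂ ^ 2 + (-4) * ε ^ 5 * ζ₁ * ζ₂ ^ 2 * κstar + (-2) * ε ^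 5 * ζ₁ ^ 2 * ζ₂ + (-6) * ε ^ 5 * ζ₁ ^ 2 * ζ₂ * κstar + 14 * ε ^ 5 * ζ₁ ^ 2 * ζ₂ ^ 3 + (-1) * ε ^ 5 * ζ₁ ^ 3 * κstar + (-3) * ε ^ 5 * ζ₁ ^ 3 * κstar ^ 2 + (-6) * ε ^ 5 * ζ₁ ^ 3 * κstar ^ 3 + (-44) * ε ^ 5 * ζ₁ ^ 3 * ζ₂ ^ 2 + (-6) * ε ^ 5 * ζ₁ ^ 3 * ζ₂ ^ 2 * κstar + (-6) * ε ^ 5 * ζ₁ ^ 4 * ζ₂ + (-30) * ε ^ 5 * ζ₁ ^ 4 * ζ₂ * κstar ^ 2 + (-48) * ε ^ 5 * ζ₁ ^ 4 * ζ₂ ^ 3 + 2 * ε ^ 5 * ζ₁ ^ 5 * κstar + 8 * ε ^ 5 * ζ₁ ^ 5 * κstar ^ 2 + 18 * ε ^ 5 * ζ₁ ^ 5 * κstar ^ 3 + 36 * ε ^ 5 * ζ₁ ^ 5 * ζ₂ ^ 2 + 12 * ε ^ 5 * ζ₁ ^ 5 * ζ₂ ^ 2 * κstar + 8 * ε ^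 5 * ζ₁ ^ 6 * ζ₂ + 16 * ε ^ 5 * ζ₁ ^ 6 * ζ₂ * κstar + 56 * ε ^ 5 * ζ₁ ^ 6 * ζ₂ * κstar ^ 2 + (-4) * ε ^ 5 * ζ₁ ^ 7 * κstar ^ 2 + (-12) * ε ^ 5 * ζ₁ ^ 7 * κstar ^ 3 + 1 * ε ^ 6 * ζ₁ * ζ₂ ^ 2 + (-1) * ε ^ 6 * ζ₁ * ζ₂ ^ 2 * κstar + (-4) * ε ^ 6 * ζ₁ ^ 2 * ζ₂ + (-6) * ε ^ 6 * ζ₁ ^ 2 * ζ₂ * κstar + (-1) * ε ^ 6 * ζ₁ ^ 3 + (-2) * ε ^ 6 * ζ₁ ^ 3 * κstar + (-3) * ε ^ 6 * ζ₁ ^ 3 * κstar ^ 2 + (-4) * ε ^ 6 * ζ₁ ^ 3 * κstar ^ 3 + (-20) * ε ^ 6 * ζ₁ ^ 3 * ζ₂ ^ 2 + (-8) * ε ^ 6 * ζ₁ ^ 3 * ζ₂ ^ 2 * κstar + (-6) * ε ^ 6 * ζ₁ ^ 4 * ζ₂ + (-10) * ε ^ 6 * ζ₁ ^ 4 * ζ₂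 * κstar ^ 2 + 2 * ε ^ 6 * ζ₁ ^ 5 * κstar + 4 * ε ^ 6 * ζ₁ ^ 5 * κstar ^ 2 + 6 * ε ^ 6 * ζ₁ ^ 5 * κstar ^ 3 + (-2) * ε ^ 7 * ζ₁ ^ 2 * ζ₂ + (-2) * ε ^ 7 * ζ₁ ^ 2 * ζ₂ * κstar + (-1) * ε ^ 7 * ζ₁ ^ 3 + (-1) * ε ^ 7 * ζ₁ ^ 3 * κstar + (-1) * ε ^ 7 * ζ₁ ^ 3 * κstar ^ 2 + (-1) * ε ^ 7 * ζ₁ ^ 3 * κstar ^ 3) * hκQ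
  exact (mul_eq_zero.mp hCT).resolve_left hC
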